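/- Full convergence under uniqueness of the F_0-minimiser: Under the regularisation setting, let {x̃_ε}_{0<ε≤ε0} ⊆ X satisfy lim_{ε→0+} F_ε(x̃_ε) = lim_{ε→0+} min_X F_ε. If F_0 admits a unique minimiser x̃ over X, then lim_{ε→0+} x̃_ε = x̃ in X. -/

import Mathlib

open Filter Topology

/-- A lower semicontinuous function into `EReal` that never takes the value `⊥`
is bounded below by a real constant on any compact set. -/
lemma lsc_bddBelow_on_compact {X : Type*} [TopologicalSpace X] [T2Space X] {R : X → EReal}
    (hRlsc : LowerSemicontinuous R) (hRbot : ∀ x, R x ≠ ⊥) {K : Set X} (hK : IsCompact K) :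
    ∃ c : ℝ, ∀ x ∈ K, (c : EReal) ≤ R x := by
  by_contra h
  push_neg at h
  set t : ℕ → Set X := fun n => K ∩ (R ⁻¹' Set.Iic ((-(n : ℝ) : ℝ) : EReal)) with ht
  have hclosed : ∀ n, IsClosed (t n) := fun n =>
    hK.isClosed.inter (hRlsc.isClosed_preimage _)
  have hsub : ∀ n, t (n + 1) ⊆ t n := by
    intro n x hx
    refine ⟨hx.1, Set.mem_preimage.2 (Set.mem_Iic.2 (le_trans hx.2 ?_))⟩
    exact EReal.coe_le_coe_iff.2 (by push_cast; linarith)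
  have hne : ∀ n, (t n).Nonempty := by
    intro n
    obtain ⟨x, hxK, hxlt⟩ := h (-(n : ℝ))
    exact ⟨x, hxK, le_of_lt hxlt⟩
  have hcomp : IsCompact (t 0) := hK.of_isClosed_subset (hclosed 0) Set.inter_subset_left
  obtain ⟨z, hz⟩ := IsCompact.nonempty_iInter_of_sequence_nonempty_isCompact_isClosed
    t hsub hne hcomp hclosed
  have hzle : ∀ n : ℕ, R z ≤ ((-(n : ℝ) : ℝ) : EReal) := by
    intro n
    exact (Set.mem_iInter.1 hz n).2
  have hzbot : (⊥ : EReal) < R z := bot_lt_iff_ne_bot.2 (hRbot z)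
  obtain ⟨y, _, hy2⟩ := EReal.exists_between_coe_real hzbot
  obtain ⟨n, hn⟩ := exists_nat_gt (-y)
  have : R z ≤ ((-(n : ℝ) : ℝ) : EReal) := hzle n
  have h2 : ((-(n : ℝ) : ℝ) : EReal) < (y : EReal) := EReal.coe_lt_coe_iff.2 (by linarith)
  exact absurd (lt_of_le_of_lt this (h2.trans hy2)) (lt_irrefl _)

private lemma tendsto_rpow_zero_aux (p : ℝ) (hp : 0 < p) :
    Tendsto (fun ε : ℝ => ε ^ p) (𝓝[>] (0 : ℝ)) (𝓝 0) := by
  have h := (Real.continuousAt_rpow_const 0 p (Or.inr hp.le)).tendsto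
  rw [Real.zero_rpow hp.ne'] at h
  exact h.mono_left nhdsWithin_le_nhds

private lemma ereal_mul_left_mono {a : ℝ} (ha : 0 ≤ a) {x y : EReal} (h : x ≤ y) :
    (a : EReal) * x ≤ (a : EReal) * y := by
  rw [EReal.mul_comm (a : EReal) x, EReal.mul_comm (a : EReal) y]
  exact mul_le_mul_of_nonneg_right h (by exact_mod_cast ha)

private lemma ereal_le_of_mul_le {a : ℝ} (ha : 0 < a) {x : EReal} {c : ℝ}
    (h : (a : EReal) * x ≤ ((a * c : ℝ) : EReal)) : x ≤ (c : EReal) := by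
  have h1 : x * (a : EReal) ≤ ((a * c : ℝ) : EReal) := by rwa [EReal.mul_comm]
  have h2 := (EReal.le_div_iff_mul_le (by exact_mod_cast ha) (EReal.coe_ne_top a)).2 h1
  rwa [← EReal.coe_div, mul_div_cancel_left₀ c ha.ne'] at h2

/-- Full convergence under uniqueness of the `F0`-minimiser: if `x̃ ε` quasi-minimises
`F ε` (namely `lim_{ε→0⁺} F ε (x̃ ε) = lim_{ε→0⁺} min_X F ε`) and `F0` admits a unique
minimiser `xm` over `X`, then `x̃ ε → xm` as `ε → 0⁺`. -/
theorem regularised_solutions_full_convergence_unique_minimiser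
    {X Y : Type*} [MetricSpace X] [MetricSpace Y]
    (Λ : X → Y) (hΛ : Continuous Λ) (x0 : X)
    (R : X → EReal)
    (hRbot : ∀ x : X, R x ≠ ⊥)
    (hRnetop : ∃ x : X, R x ≠ ⊤)
    (hRlsc : LowerSemicontinuous R)
    (hRcompact : ∀ C : ℝ, 0 < C → IsCompact {x : X | R x ≤ (C : EReal)})
    (α γ a ε0 : ℝ)
    (hα : 0 < α) (hγ : 0 < γ) (hγα : γ < α) (ha : 0 < a) (hε0 : 0 < ε0)
    (Λε : ℝ → Y) (hΛε : ∀ ε : ℝ, 0 < ε → ε ≤ ε0 → dist (Λε ε) (Λ x0) ≤ ε)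
    (hR0 : R x0 ≠ ⊤)
    (F : ℝ → X → EReal)
    (hF : ∀ ε : ℝ, 0 < ε → ε ≤ ε0 → ∀ x : X,
      F ε x = ((dist (Λ x) (Λε ε) ^ α / ε ^ γ : ℝ) : EReal) + (a : EReal) * R x)
    (F0 : X → EReal)
    (hF0eq : ∀ x : X, Λ x = Λ x0 → F0 x = (a : EReal) * R x)
    (hF0top : ∀ x : X, Λ x ≠ Λ x0 → F0 x = ⊤)
    (xt : ℝ → X) (m : EReal)
    (hxt : Tendsto (fun ε : ℝ => F ε (xt ε)) (𝓝[>] (0 : ℝ)) (𝓝 m))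
    (hmin : Tendsto (fun ε : ℝ => ⨅ x : X, F ε x) (𝓝[>] (0 : ℝ)) (𝓝 m))
    (xm : X) (hxm : ∀ x : X, F0 xm ≤ F0 x)
    (huniq : ∀ z : X, (∀ x : X, F0 z ≤ F0 x) → z = xm) :
    Tendsto (fun ε : ℝ => xt ε) (𝓝[>] (0 : ℝ)) (𝓝 xm) := by
  set l := 𝓝[>] (0 : ℝ) with hl
  have hEioc : ∀ᶠ ε in l, ε ∈ Set.Ioc (0 : ℝ) ε0 := Ioc_mem_nhdsGT hε0
  -- m is a lower bound of F0
  have hmF0 : ∀ x : X, m ≤ F0 x := by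
    intro x
    by_cases hx : Λ x = Λ x0
    · rw [hF0eq x hx]
      by_cases hRx : R x = ⊤
      · rw [hRx, EReal.coe_mul_top_of_pos ha]; exact le_top
      · set rx := (R x).toReal with hrx
        have hRxeq : R x = (rx : EReal) := (EReal.coe_toReal hRx (hRbot x)).symm
        have hgt : Tendsto (fun ε : ℝ => ((ε ^ (α - γ) + a * rx : ℝ) : EReal)) l
            (𝓝 ((a * rx : ℝ) : EReal)) := by
          rw [EReal.tendsto_coe]
          have := (tendsto_rpow_zero_aux (α - γ) (by linarith)).add_const (a * rx)
          simpa using this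
        have hev : ∀ᶠ ε in l, (⨅ x' : X, F ε x') ≤ ((ε ^ (α - γ) + a * rx : ℝ) : EReal) := by
          filter_upwards [hEioc] with ε hε
          refine le_trans (iInf_le _ x) ?_
          rw [hF ε hε.1 hε.2 x, hRxeq, ← EReal.coe_mul, ← EReal.coe_add]
          refine EReal.coe_le_coe_iff.2 ?_
          have hd : dist (Λ x) (Λε ε) ≤ ε := by
            rw [hx, dist_comm]; exact hΛε ε hε.1 hε.2
          have h1 : dist (Λ x) (Λε ε) ^ α / ε ^ γ ≤ ε ^ (α - γ) := by
            rw [Real.rpow_sub hε.1]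
            have h2 : dist (Λ x) (Λε ε) ^ α ≤ ε ^ α :=
              Real.rpow_le_rpow dist_nonneg hd hα.le
            exact (div_le_div_iff_of_pos_right (Real.rpow_pos_of_pos hε.1 γ)).2 h2
          linarith
        have := le_of_tendsto_of_tendsto hmin hgt hev
        rwa [hRxeq, ← EReal.coe_mul]
    · rw [hF0top x hx]; exact le_top
  -- r0 and basic bound on m
  set r0 := (R x0).toReal with hr0
  have hR0eq : R x0 = (r0 : EReal) := (EReal.coe_toReal hR0 (hRbot x0)).symm
  have hma : m ≤ ((a * r0 : ℝ) : EReal) := by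
    have := hmF0 x0
    rwa [hF0eq x0 rfl, hR0eq, ← EReal.coe_mul] at this
  set B : EReal := ((a * r0 + 1 : ℝ) : EReal) with hB
  have hmB : m < B := lt_of_le_of_lt hma (EReal.coe_lt_coe_iff.2 (lt_add_one _))
  have hFlt : ∀ᶠ ε in l, F ε (xt ε) < B := hxt.eventually_lt_const hmB
  have haRF : ∀ᶠ ε in l, (a : EReal) * R (xt ε) ≤ F ε (xt ε) := by
    filter_upwards [hEioc] with ε hε
    rw [hF ε hε.1 hε.2]
    have h0 : (0 : ℝ) ≤ dist (Λ (xt ε)) (Λε ε) ^ α / ε ^ γ :=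
      div_nonneg (Real.rpow_nonneg dist_nonneg α) (Real.rpow_nonneg hε.1.le γ)
    exact le_add_of_nonneg_left (EReal.coe_nonneg.2 h0)
  have haR : ∀ᶠ ε in l, (a : EReal) * R (xt ε) < B := by
    filter_upwards [hFlt, haRF] with ε h1 h2
    exact lt_of_le_of_lt h2 h1
  -- the compact set K
  set C : ℝ := max ((a * r0 + 1) / a) 1 with hC
  have hCpos : 0 < C := lt_of_lt_of_le zero_lt_one (le_max_right _ _)
  have hC1 : a * r0 + 1 ≤ a * C := by
    have h1 : (a * r0 + 1) / a ≤ C := le_max_left _ _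
    calc a * r0 + 1 = a * ((a * r0 + 1) / a) := (mul_div_cancel₀ _ ha.ne').symm
      _ ≤ a * C := mul_le_mul_of_nonneg_left h1 ha.le
  have hRC : ∀ᶠ ε in l, R (xt ε) ≤ (C : EReal) := by
    filter_upwards [haR] with ε h1
    refine ereal_le_of_mul_le ha (le_trans h1.le ?_)
    exact EReal.coe_le_coe_iff.2 hC1
  have hKcomp : IsCompact {x : X | R x ≤ (C : EReal)} := hRcompact C hCpos
  have hmemK : ∀ᶠ ε in l, xt ε ∈ {x : X | R x ≤ (C : EReal)} := hRC
  -- lower bound of R on K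
  obtain ⟨c₁, hc₁⟩ := lsc_bddBelow_on_compact hRlsc hRbot hKcomp
  set D : ℝ := max (a * r0 + 1 - a * c₁) 1 with hD
  have hDpos : 0 < D := lt_of_lt_of_le zero_lt_one (le_max_right _ _)
  -- Λ (xt ε) → Λ x0
  have hdist : ∀ᶠ ε in l, dist (Λ (xt ε)) (Λ x0) ≤ (D * ε ^ γ) ^ (1 / α) + ε := by
    filter_upwards [hFlt, hEioc, hmemK] with ε h1 h2 hk
    set d := dist (Λ (xt ε)) (Λε ε) with hd
    have hrw : F ε (xt ε) = ((d ^ α / ε ^ γ : ℝ) : EReal) + (a : EReal) * R (xt ε) :=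
      hF ε h2.1 h2.2 (xt ε)
    have hac : ((a * c₁ : ℝ) : EReal) ≤ (a : EReal) * R (xt ε) := by
      rw [EReal.coe_mul]
      exact ereal_mul_left_mono ha.le (hc₁ _ hk)
    have hsum : ((d ^ α / ε ^ γ + a * c₁ : ℝ) : EReal) < B := by
      rw [EReal.coe_add]
      calc ((d ^ α / ε ^ γ : ℝ) : EReal) + ((a * c₁ : ℝ) : EReal)
          ≤ ((d ^ α / ε ^ γ : ℝ) : EReal) + (a : EReal) * R (xt ε) :=
            add_le_add le_rfl hac
        _ = F ε (xt ε) := hrw.symm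
        _ < B := h1
    have hreal : d ^ α / ε ^ γ < a * r0 + 1 - a * c₁ := by
      have := EReal.coe_lt_coe_iff.1 hsum
      linarith
    have hrealD : d ^ α / ε ^ γ < D := lt_of_lt_of_le hreal (le_max_left _ _)
    have hεγ : (0 : ℝ) < ε ^ γ := Real.rpow_pos_of_pos h2.1 γ
    have hdα : d ^ α < D * ε ^ γ := by
      rw [div_lt_iff₀ hεγ] at hrealD
      exact hrealD
    have h3 : (d ^ α) ^ (1 / α) ≤ (D * ε ^ γ) ^ (1 / α) :=
      Real.rpow_le_rpow (Real.rpow_nonneg dist_nonneg α) hdα.le (by positivity)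
    rw [← Real.rpow_mul dist_nonneg, mul_one_div_cancel hα.ne', Real.rpow_one] at h3
    calc dist (Λ (xt ε)) (Λ x0) ≤ d + dist (Λε ε) (Λ x0) := dist_triangle _ _ _
      _ ≤ (D * ε ^ γ) ^ (1 / α) + ε := add_le_add h3 (hΛε ε h2.1 h2.2)
  have hg2 : Tendsto (fun ε : ℝ => (D * ε ^ γ) ^ (1 / α) + ε) l (𝓝 0) := by
    have t1 : Tendsto (fun ε : ℝ => D * ε ^ γ) l (𝓝 0) := by
      simpa using (tendsto_rpow_zero_aux γ hγ).const_mul D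
    have hcont := (Real.continuousAt_rpow_const 0 (1 / α) (Or.inr (by positivity))).tendsto
    rw [Real.zero_rpow (by positivity : (1 : ℝ) / α ≠ 0)] at hcont
    have t2 : Tendsto (fun ε : ℝ => (D * ε ^ γ) ^ (1 / α)) l (𝓝 0) := hcont.comp t1
    have t3 : Tendsto (fun ε : ℝ => ε) l (𝓝 0) := tendsto_id.mono_left nhdsWithin_le_nhds
    simpa using t2.add t3
  have hΛtendsto : Tendsto (fun ε : ℝ => Λ (xt ε)) l (𝓝 (Λ x0)) :=
    tendsto_iff_dist_tendsto_zero.2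
      (squeeze_zero' (Eventually.of_forall fun ε => dist_nonneg) hdist hg2)
  -- every cluster point of xt equals xm
  have hclus : ∀ z : X, ClusterPt z (Filter.map xt l) → z = xm := by
    intro z hz
    have hΛz : Λ z = Λ x0 := by
      have h1 : ClusterPt (Λ z) (Filter.map Λ (Filter.map xt l)) :=
        hz.map hΛ.continuousAt Filter.tendsto_map
      rw [Filter.map_map] at h1
      have h2 : (𝓝 (Λ z) ⊓ Filter.map (Λ ∘ xt) l).NeBot := h1
      have h3 : (𝓝 (Λ z) ⊓ 𝓝 (Λ x0)).NeBot :=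
        h2.mono (inf_le_inf_left _ hΛtendsto)
      exact eq_of_nhds_neBot h3
    have hRzm : (a : EReal) * R z ≤ m := by
      by_contra hlt
      push_neg at hlt
      obtain ⟨c, hc1, hc2⟩ := EReal.exists_between_coe_real hlt
      set c' : ℝ := c / a with hc'def
      have hc' : (c' : EReal) < R z := by
        by_contra hcon
        push_neg at hcon
        have h4 : (a : EReal) * R z ≤ ((a * c' : ℝ) : EReal) := by
          rw [EReal.coe_mul]
          exact ereal_mul_left_mono ha.le hcon
        rw [hc'def, mul_div_cancel₀ c ha.ne'] at h4
        exact absurd hc2 (not_lt.2 h4)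
      have hfreq : ∃ᶠ ε in l, (c' : EReal) < R (xt ε) := by
        have hU := hRlsc z (c' : EReal) hc'
        have h5 : ∀ᶠ y in 𝓝 z ⊓ Filter.map xt l, (c' : EReal) < R y :=
          hU.filter_mono inf_le_left
        have h6 : ∃ᶠ y in 𝓝 z ⊓ Filter.map xt l, (c' : EReal) < R y := by
          have : (𝓝 z ⊓ Filter.map xt l).NeBot := hz
          exact h5.frequently
        have h7 : ∃ᶠ y in Filter.map xt l, (c' : EReal) < R y :=
          h6.filter_mono inf_le_right
        exact Filter.frequently_map.1 h7
      have hev : ∀ᶠ ε in l, (a : EReal) * R (xt ε) < (c : EReal) := by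
        have hY := hxt.eventually_lt_const hc1
        filter_upwards [hY, haRF] with ε h1 h2
        exact lt_of_le_of_lt h2 h1
      obtain ⟨ε, hε1, hε2⟩ := (hfreq.and_eventually hev).exists
      have h8 : R (xt ε) ≤ (c' : EReal) := by
        refine ereal_le_of_mul_le ha ?_
        rw [hc'def, mul_div_cancel₀ c ha.ne']
        exact hε2.le
      exact absurd hε1 (not_lt.2 h8)
    refine huniq z fun x => ?_
    rw [hF0eq z hΛz]
    exact hRzm.trans (hmF0 x)
  -- conclude by compactness
  by_contra hnot
  rw [Filter.tendsto_def] at hnot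
  push_neg at hnot
  obtain ⟨s, hs, hsnot⟩ := hnot
  obtain ⟨r, hr, hball⟩ := Metric.mem_nhds_iff.1 hs
  set b : Set X := Metric.closedBall xm (r / 2) with hbdef
  have hbs : b ⊆ s := (Metric.closedBall_subset_ball (by linarith)).trans hball
  have hbnhds : b ∈ 𝓝 xm := Metric.closedBall_mem_nhds xm (by linarith)
  have hfreq : ∃ᶠ ε in l, xt ε ∉ b := by
    have h1 : ∃ᶠ ε in l, xt ε ∉ s := Filter.not_eventually.1 hsnot
    exact h1.mono fun ε h hb => h (hbs hb)
  set L' : Filter X := Filter.map xt l ⊓ Filter.principal {x | x ∉ b} with hL'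
  have hL'ne : L'.NeBot := by
    rw [hL']
    exact Filter.frequently_iff_neBot.1 (Filter.frequently_map.2 hfreq)
  have hL'K : L' ≤ Filter.principal {x : X | R x ≤ (C : EReal)} := by
    rw [Filter.le_principal_iff]
    exact Filter.mem_inf_of_left (Filter.eventually_map.2 hmemK)
  obtain ⟨z, hzK, hzclus⟩ := hKcomp.exists_clusterPt hL'K
  have hz1 : ClusterPt z (Filter.map xt l) := hzclus.mono inf_le_left
  have hz2 : z = xm := hclus z hz1
  have hz3 : ClusterPt z (Filter.principal {x | x ∉ b}) := hzclus.mono inf_le_right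
  have hz4 : z ∈ closure {x | x ∉ b} := mem_closure_iff_clusterPt.2 hz3
  have hz5 : z ∈ closure bᶜ := hz4
  rw [closure_compl] at hz5
  exact hz5 (by rw [hz2]; exact mem_interior_iff_mem_nhds.2 hbnhds)
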